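/- Let G ≥ 2 be an integer, Δ ∈ (0, 1/2], p ∈ [Δ, 1−Δ], and δ ∈ (0,1). Define ε_δ = sqrt( (1/(2G)) · log( 2 / (δ·(1 − (1−Δ)^G − Δ^G)) ) ). Then, conditional on the non-degenerate event S, with probability at least 1 − δ one has |p̂ − p| < ε_δ; that is, P(|p̂ − p| < ε_δ | S) ≥ 1 − δ. -/

import Mathlib

open Finset Nat

lemma fact_bound (n : ℕ) : 4 ^ n ≤ (n + 1) * (n + 1)! := by
  induction n with
  | zero => simp
  | succ n ih =>
    have h : 4 * ((n + 1) * (n + 1)!) ≤ (n + 2) * (n + 2)! := by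
      rw [Nat.factorial_succ (n + 1)]
      have h2 : 4 * (n + 1) ≤ (n + 2) * (n + 2) := by nlinarith
      calc 4 * ((n + 1) * (n + 1)!) = (4 * (n + 1)) * (n + 1)! := by ring
      _ ≤ ((n + 2) * (n + 2)) * (n + 1)! := Nat.mul_le_mul_right _ h2
      _ = (n + 2) * ((n + 1 + 1) * (n + 1)!) := by ring
    calc 4 ^ (n + 1) = 4 * 4 ^ n := by ring
    _ ≤ 4 * ((n + 1) * (n + 1)!) := by omega
    _ ≤ (n + 2) * (n + 2)! := h

lemma exp_sub_one_le {t : ℝ} (h0 : 0 ≤ t) (h4 : t < 4) :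
    Real.exp t - 1 ≤ 16 * t / (4 - t) ^ 2 := by
  set r : ℝ := t / 4 with hr
  have hr0 : 0 ≤ r := by positivity
  have hr1 : r < 1 := by rw [hr]; linarith
  have hrn : ‖r‖ < 1 := by rwa [Real.norm_eq_abs, abs_of_nonneg hr0]
  have hs1 : Summable (fun n : ℕ => t ^ n / n !) := Real.summable_pow_div_factorial t
  have hs1' : Summable (fun n : ℕ => t ^ (n + 1) / (n + 1)!) :=
    (summable_nat_add_iff 1).mpr hs1
  have hs2 : Summable (fun n : ℕ => (n : ℝ) * r ^ n) := by
    have := summable_pow_mul_geometric_of_norm_lt_one (R := ℝ) 1 hrn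
    simpa using this
  have hs3 : Summable (fun n : ℕ => r ^ n) := summable_geometric_of_lt_one hr0 hr1
  have hs4 : Summable (fun n : ℕ => ((n : ℝ) + 1) * r ^ n) := by
    have h := hs2.add hs3
    convert h using 2 with n
    ring
  have hs5 : Summable (fun n : ℕ => t * (((n : ℝ) + 1) * r ^ n)) := hs4.mul_left t
  have hexp : Real.exp t = ∑' n : ℕ, t ^ n / n ! := by
    rw [Real.exp_eq_exp_ℝ, NormedSpace.exp_eq_tsum_div]
  have hsplit : Real.exp t = 1 + ∑' n : ℕ, t ^ (n + 1) / (n + 1)! := by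
    rw [hexp, Summable.tsum_eq_zero_add hs1]; simp
  have hterm : ∀ n : ℕ, t ^ (n + 1) / (n + 1)! ≤ t * (((n : ℝ) + 1) * r ^ n) := by
    intro n
    have hb : (4 : ℝ) ^ n ≤ ((n : ℝ) + 1) * (n + 1)! := by
      have h := fact_bound n
      have := (Nat.cast_le (α := ℝ)).mpr h
      push_cast at this
      convert this using 1 <;> push_cast <;> ring
    have htp : (0 : ℝ) ≤ t ^ (n + 1) := by positivity
    have hf : (0 : ℝ) < ((n + 1)! : ℝ) := by exact_mod_cast Nat.factorial_pos (n + 1)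
    have h4n : (0 : ℝ) < 4 ^ n := by positivity
    have hrpow : r ^ n = t ^ n / 4 ^ n := by rw [hr, div_pow]
    have key : t ^ (n + 1) * 4 ^ n ≤ t ^ (n + 1) * (((n : ℝ) + 1) * (n + 1)!) :=
      mul_le_mul_of_nonneg_left hb htp
    rw [hrpow]
    rw [show t * (((n : ℝ) + 1) * (t ^ n / 4 ^ n)) = (((n : ℝ) + 1) * t ^ (n + 1)) / 4 ^ n by
      field_simp; ring]
    rw [div_le_div_iff₀ hf h4n]
    nlinarith [key]
  have hle : (∑' n : ℕ, t ^ (n + 1) / (n + 1)!) ≤ ∑' n : ℕ, t * (((n : ℝ) + 1) * r ^ n) :=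
    Summable.tsum_le_tsum hterm hs1' hs5
  have hval : (∑' n : ℕ, t * (((n : ℝ) + 1) * r ^ n)) = 16 * t / (4 - t) ^ 2 := by
    rw [tsum_mul_left]
    have : (∑' n : ℕ, ((n : ℝ) + 1) * r ^ n) = r / (1 - r) ^ 2 + 1 / (1 - r) := by
      rw [show (fun n : ℕ => ((n : ℝ) + 1) * r ^ n)
          = fun n : ℕ => (n : ℝ) * r ^ n + r ^ n by funext n; ring]
      rw [Summable.tsum_add hs2 hs3, tsum_coe_mul_geometric_of_norm_lt_one hrn,
        tsum_geometric_of_lt_one hr0 hr1]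
      rw [one_div]
    rw [this, hr]
    have h4t : (4 : ℝ) - t ≠ 0 := by linarith
    field_simp
    ring
  linarith [hsplit, hle, hval.le, hval.ge]

lemma deriv_ineq (p s : ℝ) (hp0 : 0 ≤ p) (hp1 : p ≤ 1) (hs : 0 ≤ s) :
    p * Real.exp s ≤ (p + s / 4) * (1 - p + p * Real.exp s) := by
  have hE1 : 1 ≤ Real.exp s := Real.one_le_exp hs
  obtain ⟨a, hEa⟩ : ∃ a, Real.exp s = a + 1 := ⟨Real.exp s - 1, by ring⟩
  have ha0 : 0 ≤ a := by linarith
  rw [hEa]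
  rcases lt_or_ge s 4 with h4 | h4
  · have hexp := exp_sub_one_le hs h4
    rw [hEa] at hexp
    have hpos : (0:ℝ) < (4 - s) ^ 2 := pow_pos (by linarith) 2
    have hd : a * (4 - s) ^ 2 ≤ 16 * s := by
      calc a * (4 - s) ^ 2 ≤ (16 * s / (4 - s) ^ 2) * (4 - s) ^ 2 :=
        mul_le_mul_of_nonneg_right (by linarith) hpos.le
      _ = 16 * s := by field_simp
    rcases eq_or_lt_of_le ha0 with h0 | h0
    · rw [← h0]; nlinarith
    · have h16 : a * (a * (4 - s) ^ 2) ≤ a * (16 * s) :=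
        mul_le_mul_of_nonneg_left hd h0.le
      nlinarith [sq_nonneg (8 * a * p + a * (s - 4)), h16, h0, hs]
  · nlinarith [mul_nonneg (mul_nonneg ha0 hp0) hp0,
      mul_nonneg (mul_nonneg ha0 hp0) (by linarith : (0:ℝ) ≤ s - 4), hs]

lemma mgf_bound (p : ℝ) (hp0 : 0 ≤ p) (hp1 : p ≤ 1) {t : ℝ} (ht : 0 ≤ t) :
    1 - p + p * Real.exp t ≤ Real.exp (p * t + t ^ 2 / 8) := by
  have hpos : ∀ s : ℝ, 0 < 1 - p + p * Real.exp s := by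
    intro s
    rcases eq_or_lt_of_le hp0 with h | h
    · rw [← h]; norm_num
    · nlinarith [Real.exp_pos s, mul_pos h (Real.exp_pos s)]
  set F : ℝ → ℝ := fun s => p * s + s ^ 2 / 8 - Real.log (1 - p + p * Real.exp s) with hF
  have hderiv : ∀ s : ℝ,
      HasDerivAt F (p + s / 4 - p * Real.exp s / (1 - p + p * Real.exp s)) s := by
    intro s
    have h1 : HasDerivAt (fun s : ℝ => 1 - p + p * Real.exp s) (p * Real.exp s) s := by
      simpa using ((Real.hasDerivAt_exp s).const_mul p).const_add (1 - p)
    have h2 : HasDerivAt (fun s : ℝ => Real.log (1 - p + p * Real.exp s))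
        (p * Real.exp s / (1 - p + p * Real.exp s)) s := h1.log (ne_of_gt (hpos s))
    have hid : HasDerivAt (fun s : ℝ => p * s) p s := by
      simpa using (hasDerivAt_id s).const_mul p
    have hsq : HasDerivAt (fun s : ℝ => s ^ 2 / 8) (s / 4) s := by
      have h := (hasDerivAt_pow 2 s).div_const 8
      refine h.congr_deriv ?_
      push_cast
      ring
    exact (hid.add hsq).sub h2
  have hmono : MonotoneOn F (Set.Ici 0) := by
    apply monotoneOn_of_deriv_nonneg (convex_Ici 0)
    · exact fun s _ => ((hderiv s).continuousAt).continuousWithinAt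
    · exact fun s _ => ((hderiv s).differentiableAt).differentiableWithinAt
    · intro s hs
      rw [(hderiv s).deriv]
      have hsge : (0:ℝ) ≤ s := by
        rw [interior_Ici] at hs
        exact le_of_lt hs
      have hps := hpos s
      rw [sub_nonneg, div_le_iff₀ hps]
      linarith [deriv_ineq p s hp0 hp1 hsge]
  have h0 : F 0 = 0 := by simp [hF]
  have hFt : 0 ≤ F t := by
    have := hmono Set.self_mem_Ici (Set.mem_Ici.mpr ht) ht
    rwa [h0] at this
  have hlog : Real.log (1 - p + p * Real.exp t) ≤ p * t + t ^ 2 / 8 := by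
    have : 0 ≤ p * t + t ^ 2 / 8 - Real.log (1 - p + p * Real.exp t) := hFt
    linarith
  calc 1 - p + p * Real.exp t
      = Real.exp (Real.log (1 - p + p * Real.exp t)) := (Real.exp_log (hpos t)).symm
  _ ≤ _ := Real.exp_le_exp.mpr hlog

lemma chernoff_upper (G : ℕ) (p ε : ℝ) (hp0 : 0 ≤ p) (hp1 : p ≤ 1) (hε : 0 ≤ ε) :
    ∑ k ∈ (Finset.range (G + 1)).filter (fun k : ℕ => (G : ℝ) * (p + ε) ≤ (k : ℝ)),
      (G.choose k : ℝ) * p ^ k * (1 - p) ^ (G - k)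
    ≤ Real.exp (-(2 * G * ε ^ 2)) := by
  set t : ℝ := 4 * ε with htdef
  have ht : 0 ≤ t := by positivity
  have hq0 : 0 ≤ 1 - p := by linarith
  set g : ℕ → ℝ := fun k => (G.choose k : ℝ) * p ^ k * (1 - p) ^ (G - k)
      * Real.exp (t * ((k : ℝ) - (G : ℝ) * (p + ε))) with hg
  have step1 : ∑ k ∈ (Finset.range (G + 1)).filter (fun k : ℕ => (G : ℝ) * (p + ε) ≤ (k : ℝ)),
      (G.choose k : ℝ) * p ^ k * (1 - p) ^ (G - k)
      ≤ ∑ k ∈ Finset.range (G + 1), g k := by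
    have h1 : ∀ k ∈ (Finset.range (G + 1)).filter
        (fun k : ℕ => (G : ℝ) * (p + ε) ≤ (k : ℝ)),
        (G.choose k : ℝ) * p ^ k * (1 - p) ^ (G - k) ≤ g k := by
      intro k hk
      rw [Finset.mem_filter] at hk
      have hexp1 : 1 ≤ Real.exp (t * ((k : ℝ) - (G : ℝ) * (p + ε))) :=
        Real.one_le_exp (mul_nonneg ht (by linarith [hk.2]))
      have hnn : 0 ≤ (G.choose k : ℝ) * p ^ k * (1 - p) ^ (G - k) := by positivity
      calc (G.choose k : ℝ) * p ^ k * (1 - p) ^ (G - k)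
          = (G.choose k : ℝ) * p ^ k * (1 - p) ^ (G - k) * 1 := by ring
      _ ≤ g k := by rw [hg]; exact mul_le_mul_of_nonneg_left hexp1 hnn
    refine (Finset.sum_le_sum h1).trans ?_
    exact Finset.sum_le_sum_of_subset_of_nonneg (Finset.filter_subset _ _)
        (fun k _ _ => by rw [hg]; positivity)
  have perk : ∀ k : ℕ, g k = Real.exp (-(t * G * (p + ε)))
      * ((p * Real.exp t) ^ k * (1 - p) ^ (G - k) * (G.choose k : ℝ)) := by
    intro k
    simp only [hg]
    rw [show t * ((k : ℝ) - (G : ℝ) * (p + ε)) = t * k + -(t * G * (p + ε)) by ring,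
      Real.exp_add, mul_comm t (k : ℝ), Real.exp_nat_mul, mul_pow]
    ring
  have step2 : ∑ k ∈ Finset.range (G + 1), g k
      = Real.exp (-(t * G * (p + ε))) * (p * Real.exp t + (1 - p)) ^ G := by
    rw [add_pow, Finset.mul_sum]
    exact Finset.sum_congr rfl fun k _ => perk k
  have hbase : 0 ≤ p * Real.exp t + (1 - p) :=
    add_nonneg (mul_nonneg hp0 (Real.exp_pos t).le) hq0
  have hpow : (p * Real.exp t + (1 - p)) ^ G ≤ Real.exp (p * t + t ^ 2 / 8) ^ G := by
    apply pow_le_pow_left₀ hbase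
    have := mgf_bound p hp0 hp1 ht
    linarith
  calc ∑ k ∈ (Finset.range (G + 1)).filter (fun k : ℕ => (G : ℝ) * (p + ε) ≤ (k : ℝ)),
      (G.choose k : ℝ) * p ^ k * (1 - p) ^ (G - k)
      ≤ ∑ k ∈ Finset.range (G + 1), g k := step1
  _ = Real.exp (-(t * G * (p + ε))) * (p * Real.exp t + (1 - p)) ^ G := step2
  _ ≤ Real.exp (-(t * G * (p + ε))) * Real.exp (p * t + t ^ 2 / 8) ^ G :=
      mul_le_mul_of_nonneg_left hpow (Real.exp_pos _).le
  _ = Real.exp (-(2 * G * ε ^ 2)) := by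
      rw [← Real.exp_nat_mul, ← Real.exp_add]
      congr 1
      rw [htdef]
      ring

lemma chernoff_lower (G : ℕ) (p ε : ℝ) (hp0 : 0 ≤ p) (hp1 : p ≤ 1) (hε : 0 ≤ ε) :
    ∑ k ∈ (Finset.range (G + 1)).filter (fun k : ℕ => (k : ℝ) ≤ (G : ℝ) * (p - ε)),
      (G.choose k : ℝ) * p ^ k * (1 - p) ^ (G - k)
    ≤ Real.exp (-(2 * G * ε ^ 2)) := by
  have h := chernoff_upper G (1 - p) ε (by linarith) (by linarith) hε
  refine le_trans (le_of_eq ?_) h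
  apply Finset.sum_nbij' (i := fun k => G - k) (j := fun k => G - k)
  · intro k hk
    rw [Finset.mem_filter, Finset.mem_range] at hk ⊢
    have hkG : k ≤ G := by omega
    constructor
    · omega
    · rw [Nat.cast_sub hkG]
      have := hk.2
      push_cast
      linarith
  · intro k hk
    rw [Finset.mem_filter, Finset.mem_range] at hk ⊢
    have hkG : k ≤ G := by omega
    constructor
    · omega
    · rw [Nat.cast_sub hkG]
      have := hk.2
      push_cast at this ⊢
      linarith
  · intro k hk
    rw [Finset.mem_filter, Finset.mem_range] at hk
    omega
  · intro k hk
    rw [Finset.mem_filter, Finset.mem_range] at hk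
    omega
  · intro k hk
    rw [Finset.mem_filter, Finset.mem_range] at hk
    have hkG : k ≤ G := by omega
    rw [Nat.choose_symm hkG, Nat.sub_sub_self hkG]
    ring_nf

lemma pow_add_pow_le_endpoints (G : ℕ) (Δ p : ℝ) (hΔ0 : 0 ≤ Δ) (h1 : Δ ≤ p)
    (h2 : p ≤ 1 - Δ) : p ^ G + (1 - p) ^ G ≤ Δ ^ G + (1 - Δ) ^ G := by
  have hp0 : 0 ≤ p := le_trans hΔ0 h1
  have hΔ1 : Δ ≤ 1 - p := by linarith
  have e1 := geom_sum₂_mul (1 - Δ) (1 - p) G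
  have e2 := geom_sum₂_mul p Δ G
  have hsum : (∑ i ∈ Finset.range G, p ^ i * Δ ^ (G - 1 - i))
      ≤ ∑ i ∈ Finset.range G, (1 - Δ) ^ i * (1 - p) ^ (G - 1 - i) := by
    apply Finset.sum_le_sum
    intro i _
    apply mul_le_mul (pow_le_pow_left₀ hp0 h2 i) (pow_le_pow_left₀ hΔ0 hΔ1 _)
      (pow_nonneg hΔ0 _) (pow_nonneg (by linarith) _)
  have hmul := mul_le_mul_of_nonneg_right hsum (sub_nonneg.mpr h1)
  have e1' : (1 - Δ) - (1 - p) = p - Δ := by ring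
  rw [e1'] at e1
  nlinarith [e1, e2, hmul]

lemma sum_middle (G : ℕ) (hG : 2 ≤ G) (p : ℝ) :
    ∑ k ∈ Finset.Icc 1 (G - 1), (G.choose k : ℝ) * p ^ k * (1 - p) ^ (G - k)
      = 1 - (1 - p) ^ G - p ^ G := by
  have hfull : ∑ k ∈ Finset.range (G + 1),
      (G.choose k : ℝ) * p ^ k * (1 - p) ^ (G - k) = 1 := by
    calc ∑ k ∈ Finset.range (G + 1), (G.choose k : ℝ) * p ^ k * (1 - p) ^ (G - k)
        = ∑ k ∈ Finset.range (G + 1), p ^ k * (1 - p) ^ (G - k) * (G.choose k : ℝ) :=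
          Finset.sum_congr rfl fun k _ => by ring
    _ = (p + (1 - p)) ^ G := (add_pow p (1 - p) G).symm
    _ = 1 := by norm_num
  have hset : Finset.range (G + 1) = insert 0 (insert G (Finset.Icc 1 (G - 1))) := by
    ext k
    simp only [Finset.mem_range, Finset.mem_insert, Finset.mem_Icc]
    omega
  have h0 : (0 : ℕ) ∉ insert G (Finset.Icc 1 (G - 1)) := by
    simp only [Finset.mem_insert, Finset.mem_Icc]
    omega
  have hGmem : G ∉ Finset.Icc 1 (G - 1) := by
    simp only [Finset.mem_Icc]
    omega
  rw [hset, Finset.sum_insert h0, Finset.sum_insert hGmem] at hfull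
  have hz : (G.choose 0 : ℝ) * p ^ 0 * (1 - p) ^ (G - 0) = (1 - p) ^ G := by simp
  have hg : (G.choose G : ℝ) * p ^ G * (1 - p) ^ (G - G) = p ^ G := by simp
  rw [hz, hg] at hfull
  linarith

theorem cond_concentration_confidence (G : ℕ) (hG : 2 ≤ G) (Δ : ℝ)
    (hΔ : Δ ∈ Set.Ioc (0 : ℝ) (1 / 2)) (p : ℝ) (hp : p ∈ Set.Icc Δ (1 - Δ))
    (δ : ℝ) (hδ : δ ∈ Set.Ioo (0 : ℝ) 1) (εδ : ℝ)
    (hεδ : εδ = Real.sqrt ((1 / (2 * G)) *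
      Real.log (2 / (δ * (1 - (1 - Δ) ^ G - Δ ^ G))))) :
    (∑ k ∈ (Finset.Icc 1 (G - 1)).filter (fun k : ℕ => |(k : ℝ) / G - p| < εδ),
        (G.choose k : ℝ) * p ^ k * (1 - p) ^ (G - k))
      / (1 - (1 - p) ^ G - p ^ G)
    ≥ 1 - δ := by
  obtain ⟨hΔ0, hΔh⟩ := hΔ
  obtain ⟨hpl, hpr⟩ := hp
  obtain ⟨hδ0, hδ1⟩ := hδ
  have hp0 : 0 ≤ p := le_trans hΔ0.le hpl
  have hp1 : p ≤ 1 := by linarith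
  have hG0 : (0 : ℝ) < G := by
    have : 0 < G := by omega
    exact_mod_cast this
  set C : ℝ := 1 - (1 - Δ) ^ G - Δ ^ G with hCdef
  set PS : ℝ := 1 - (1 - p) ^ G - p ^ G with hPSdef
  -- positivity of C
  have hΔ1 : Δ ≤ 1 := by linarith
  have hCpos : 0 < C := by
    have h1 : Δ ^ G ≤ Δ ^ 2 := pow_le_pow_of_le_one hΔ0.le hΔ1 hG
    have h2 : (1 - Δ) ^ G ≤ (1 - Δ) ^ 2 :=
      pow_le_pow_of_le_one (by linarith) (by linarith) hG
    have : Δ ^ 2 + (1 - Δ) ^ 2 < 1 := by nlinarith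
    rw [hCdef]
    linarith
  have hC1 : C < 1 := by
    have h1 : 0 < Δ ^ G := pow_pos hΔ0 G
    have h2 : (0:ℝ) ≤ (1 - Δ) ^ G := pow_nonneg (by linarith) G
    rw [hCdef]; linarith
  have hCPS : C ≤ PS := by
    have := pow_add_pow_le_endpoints G Δ p hΔ0.le hpl hpr
    rw [hCdef, hPSdef]; linarith
  have hPSpos : 0 < PS := lt_of_lt_of_le hCpos hCPS
  -- epsilon facts
  have hδC : 0 < δ * C := mul_pos hδ0 hCpos
  have hδC2 : δ * C < 2 := by nlinarith
  have harg : 1 < 2 / (δ * C) := (one_lt_div hδC).mpr hδC2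
  have hL : 0 < Real.log (2 / (δ * C)) := Real.log_pos harg
  have hin : 0 < (1 / (2 * G)) * Real.log (2 / (δ * C)) := by positivity
  have hε2 : εδ ^ 2 = (1 / (2 * G)) * Real.log (2 / (δ * C)) := by
    rw [hεδ, Real.sq_sqrt hin.le]
  have hεpos : 0 < εδ := by
    rw [hεδ]
    exact Real.sqrt_pos.mpr hin
  have hexpval : Real.exp (-(2 * G * εδ ^ 2)) = δ * C / 2 := by
    have hexpo : 2 * (G : ℝ) * εδ ^ 2 = Real.log (2 / (δ * C)) := by
      rw [hε2]
      field_simp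
    rw [hexpo, Real.exp_neg, Real.exp_log (by positivity)]
    rw [inv_div]
  -- tail bound
  set Fup := (Finset.range (G + 1)).filter (fun k : ℕ => (G : ℝ) * (p + εδ) ≤ (k : ℝ))
    with hFup
  set Flo := (Finset.range (G + 1)).filter (fun k : ℕ => (k : ℝ) ≤ (G : ℝ) * (p - εδ))
    with hFlo
  have hdisj : Disjoint Fup Flo := by
    rw [Finset.disjoint_left]
    intro k hk1 hk2
    rw [hFup, Finset.mem_filter] at hk1
    rw [hFlo, Finset.mem_filter] at hk2
    nlinarith [hk1.2, hk2.2]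
  set B := (Finset.Icc 1 (G - 1)).filter (fun k : ℕ => ¬ |(k : ℝ) / G - p| < εδ) with hB
  have hsub : B ⊆ Fup ∪ Flo := by
    intro k hk
    rw [hB, Finset.mem_filter, Finset.mem_Icc] at hk
    obtain ⟨⟨hk1, hk2⟩, hk3⟩ := hk
    have hkr : k ∈ Finset.range (G + 1) := by
      rw [Finset.mem_range]; omega
    have habs : εδ ≤ |(k : ℝ) / G - p| := le_of_not_gt hk3
    rw [le_abs] at habs
    rw [Finset.mem_union, hFup, hFlo, Finset.mem_filter, Finset.mem_filter]
    rcases habs with h | h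
    · left
      refine ⟨hkr, ?_⟩
      have h2 : p + εδ ≤ (k : ℝ) / G := by linarith
      calc (G : ℝ) * (p + εδ) ≤ G * ((k : ℝ) / G) :=
        mul_le_mul_of_nonneg_left h2 hG0.le
      _ = (k : ℝ) := by field_simp
    · right
      refine ⟨hkr, ?_⟩
      have : (k : ℝ) / G ≤ p - εδ := by linarith
      calc (k : ℝ) = G * ((k : ℝ) / G) := by field_simp
      _ ≤ (G : ℝ) * (p - εδ) := mul_le_mul_of_nonneg_left this hG0.le
  have term_nonneg : ∀ k : ℕ, 0 ≤ (G.choose k : ℝ) * p ^ k * (1 - p) ^ (G - k) := by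
    intro k
    exact mul_nonneg (mul_nonneg (Nat.cast_nonneg _) (pow_nonneg hp0 _))
      (pow_nonneg (by linarith) _)
  have hBle : ∑ k ∈ B, (G.choose k : ℝ) * p ^ k * (1 - p) ^ (G - k) ≤ δ * C := by
    calc ∑ k ∈ B, (G.choose k : ℝ) * p ^ k * (1 - p) ^ (G - k)
        ≤ ∑ k ∈ Fup ∪ Flo, (G.choose k : ℝ) * p ^ k * (1 - p) ^ (G - k) :=
          Finset.sum_le_sum_of_subset_of_nonneg hsub (fun k _ _ => term_nonneg k)
    _ = (∑ k ∈ Fup, (G.choose k : ℝ) * p ^ k * (1 - p) ^ (G - k))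
        + ∑ k ∈ Flo, (G.choose k : ℝ) * p ^ k * (1 - p) ^ (G - k) :=
          Finset.sum_union hdisj
    _ ≤ Real.exp (-(2 * G * εδ ^ 2)) + Real.exp (-(2 * G * εδ ^ 2)) :=
          add_le_add (chernoff_upper G p εδ hp0 hp1 hεpos.le)
            (chernoff_lower G p εδ hp0 hp1 hεpos.le)
    _ = δ * C := by rw [hexpval]; ring
  -- split the middle sum
  have hsplit : (∑ k ∈ (Finset.Icc 1 (G - 1)).filter
        (fun k : ℕ => |(k : ℝ) / G - p| < εδ),
        (G.choose k : ℝ) * p ^ k * (1 - p) ^ (G - k))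
      + ∑ k ∈ B, (G.choose k : ℝ) * p ^ k * (1 - p) ^ (G - k) = PS := by
    rw [hB, Finset.sum_filter_add_sum_filter_not]
    rw [hPSdef]
    exact sum_middle G hG p
  rw [ge_iff_le, le_div_iff₀ hPSpos]
  have hδCPS : δ * C ≤ δ * PS := mul_le_mul_of_nonneg_left hCPS hδ0.le
  nlinarith [hBle, hsplit, hδCPS]
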